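/- Let V ∈ ℂ^{M×n} with linearly independent columns, P ∈ ℝ^{M×n} a selection matrix with P^T V invertible, I_n = V (P^T V)^{-1} P^T, and let P_V denote the orthogonal projection onto the column span of V (with respect to the Euclidean inner product on ℂ^M). Then for every h ∈ ℂ^M, ‖h − I_n h‖₂ ≤ ‖I_n‖₂ · ‖h − P_V h‖₂, where ‖·‖₂ on operators is the spectral norm. -/

import Mathlib

open Matrix ComplexInnerProductSpace

private lemma key_scalar {a b c : ℝ} (ha : 0 ≤ a) (hb : 0 ≤ b) (hc : 1 ≤ c)
    (H : ∀ t : ℝ, (1+t)^2 * a ≤ c * (b + t^2 * a)) : a ≤ (c-1)*b := by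
  rcases eq_or_lt_of_le ha with h0 | ha'
  · nlinarith [mul_nonneg (sub_nonneg.2 hc) hb]
  rcases eq_or_lt_of_le hc with h1 | hc'
  · exfalso
    have h := H (b/a + 1)
    rw [← h1] at h
    nlinarith [sq_nonneg (b/a), mul_pos ha' ha', (div_mul_cancel₀ b (ne_of_gt ha'))]
  · have hd : 0 < c - 1 := by linarith
    have h := H (1/(c-1))
    have h2 : c^2 * a ≤ c * b * (c-1)^2 + c * a := by
      have hne : c - 1 ≠ 0 := ne_of_gt hd
      have h' := mul_le_mul_of_nonneg_right h (le_of_lt (pow_pos hd 2))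
      field_simp at h'
      nlinarith [h', sq_nonneg (c-1)]
    nlinarith [mul_pos (show (0:ℝ) < c by linarith) hd]

private lemma toEuclideanLin_mul_apply {l m n : ℕ} (A : Matrix (Fin l) (Fin m) ℂ)
    (B : Matrix (Fin m) (Fin n) ℂ) (x : EuclideanSpace ℂ (Fin n)) :
    Matrix.toEuclideanLin (A * B) x = Matrix.toEuclideanLin A (Matrix.toEuclideanLin B x) := by
  simp only [Matrix.toEuclideanLin_apply]
  congr 1
  rw [← Matrix.mulVec_mulVec]

set_option maxHeartbeats 1000000 in
/-- DEIM error bound against the best (orthogonal-projection) approximation: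
`‖h − I_n h‖₂ ≤ ‖I_n‖₂ ‖h − P_V h‖₂`. -/
theorem stmt_5 {M n : ℕ} (hn : 0 < n) (hnM : n ≤ M)
    (V : Matrix (Fin M) (Fin n) ℂ)
    (hV : LinearIndependent ℂ (fun j : Fin n => fun i : Fin M => V i j))
    (σ : Fin n → Fin M) (hσ : Function.Injective σ)
    (P : Matrix (Fin M) (Fin n) ℂ)
    (hP : P = Matrix.of fun k j => if k = σ j then 1 else 0)
    (hinv : IsUnit (Pᵀ * V)) :
    let In : EuclideanSpace ℂ (Fin M) →L[ℂ] EuclideanSpace ℂ (Fin M) :=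
      LinearMap.toContinuousLinearMap (Matrix.toEuclideanLin (V * (Pᵀ * V)⁻¹ * Pᵀ))
    let S : Submodule ℂ (EuclideanSpace ℂ (Fin M)) :=
      LinearMap.range (Matrix.toEuclideanLin V)
    ∀ h : EuclideanSpace ℂ (Fin M),
      ‖h - In h‖ ≤ ‖In‖ * ‖h - (S.orthogonalProjectionOnto h : EuclideanSpace ℂ (Fin M))‖ := by
  intro In S h
  classical
  have hIn_apply : ∀ x, In x = Matrix.toEuclideanLin (V * (Pᵀ * V)⁻¹ * Pᵀ) x := fun _ => rfl
  have hdet : (Pᵀ * V)⁻¹ * (Pᵀ * V) = 1 :=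
    Matrix.nonsing_inv_mul _ ((Matrix.isUnit_iff_isUnit_det _).mp hinv)
  have hAV : V * (Pᵀ * V)⁻¹ * Pᵀ * V = V := by
    rw [Matrix.mul_assoc (V * (Pᵀ * V)⁻¹), Matrix.mul_assoc V, hdet, Matrix.mul_one]
  -- In fixes S
  have hfix : ∀ y ∈ S, In y = y := by
    rintro y ⟨x, rfl⟩
    rw [hIn_apply, ← toEuclideanLin_mul_apply, hAV]
  -- range of In lies in S
  have hrange : ∀ x, In x ∈ S := by
    intro x
    rw [hIn_apply]
    have : V * (Pᵀ * V)⁻¹ * Pᵀ = V * ((Pᵀ * V)⁻¹ * Pᵀ) := by rw [Matrix.mul_assoc]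
    rw [this, toEuclideanLin_mul_apply]
    exact ⟨_, rfl⟩
  -- ‖In‖ ≥ 1
  have hnorm1 : 1 ≤ ‖In‖ := by
    set j : Fin n := ⟨0, hn⟩
    set v : EuclideanSpace ℂ (Fin M) := Matrix.toEuclideanLin V (EuclideanSpace.single j 1) with hv
    have hvcol : ∀ i, v i = V i j := by
      intro i
      show (V *ᵥ Pi.single j 1) i = V i j
      simp [Matrix.mulVec_single]
    have hvne : v ≠ 0 := by
      intro h0
      apply hV.ne_zero j
      funext i
      have := hvcol i
      rw [h0] at this
      simpa using this.symm
    have hvS : v ∈ S := ⟨_, rfl⟩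
    have hfv : In v = v := hfix v hvS
    have := In.le_opNorm v
    rw [hfv] at this
    have hvpos : 0 < ‖v‖ := norm_pos_iff.mpr hvne
    exact (le_mul_iff_one_le_left hvpos).mp this
  -- main argument
  set w : EuclideanSpace ℂ (Fin M) := h - (S.orthogonalProjectionOnto h : EuclideanSpace ℂ (Fin M)) with hw
  have hwperp : w ∈ Sᗮ := S.sub_starProjection_mem_orthogonal h
  set u : EuclideanSpace ℂ (Fin M) := In w with hu
  have huS : u ∈ S := hrange w
  have hfu : In u = u := hfix u huS
  have hinner_wu : (inner ℂ w u : ℂ) = 0 := by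
    have := (Submodule.mem_orthogonal S w).mp hwperp u huS
    rw [← inner_conj_symm, this, map_zero]
  -- h - In h = w - u
  have hdiff : h - In h = w - u := by
    have hproj : In ((S.orthogonalProjectionOnto h : EuclideanSpace ℂ (Fin M))) =
        (S.orthogonalProjectionOnto h : EuclideanSpace ℂ (Fin M)) :=
      hfix _ (SetLike.coe_mem _)
    rw [hu, hw, map_sub, hproj]; abel
  -- quadratic inequality family
  have H : ∀ t : ℝ, (1+t)^2 * ‖u‖^2 ≤ ‖In‖^2 * (‖w‖^2 + t^2 * ‖u‖^2) := by
    intro t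
    set x : EuclideanSpace ℂ (Fin M) := w + (t : ℂ) • u with hx
    have hInx : In x = ((1 + t : ℝ) : ℂ) • u := by
      rw [hx, map_add, In.map_smul, hfu, ← hu]
      push_cast
      rw [add_smul, one_smul]
    have h1 : ‖In x‖ = |1 + t| * ‖u‖ := by
      rw [hInx, norm_smul, Complex.norm_real, Real.norm_eq_abs]
    have h2 : ‖x‖^2 = ‖w‖^2 + t^2 * ‖u‖^2 := by
      rw [hx, @norm_add_sq ℂ]
      have : (inner ℂ w ((t : ℂ) • u) : ℂ) = 0 := by
        rw [inner_smul_right, hinner_wu, mul_zero]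
      rw [this]
      simp [norm_smul, mul_pow]
    have h3 := In.le_opNorm x
    have h4 := mul_self_le_mul_self (norm_nonneg (In x)) h3
    rw [h1] at h4
    nlinarith [sq_abs (1+t), norm_nonneg x, norm_nonneg u, In.opNorm_nonneg, h2]
  have hkey : ‖u‖^2 ≤ (‖In‖^2 - 1) * ‖w‖^2 :=
    key_scalar (sq_nonneg _) (sq_nonneg _) (by nlinarith) H
  -- conclude
  have hnsq : ‖h - In h‖^2 = ‖w‖^2 + ‖u‖^2 := by
    rw [hdiff, @norm_sub_sq ℂ, hinner_wu]
    simp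
  have hfinal : ‖h - In h‖^2 ≤ (‖In‖ * ‖w‖)^2 := by
    rw [hnsq, mul_pow]
    nlinarith [hkey]
  have h5 : 0 ≤ ‖In‖ * ‖w‖ := mul_nonneg In.opNorm_nonneg (norm_nonneg w)
  nlinarith [norm_nonneg (h - In h), hfinal, h5]
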